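/- Assume the valuation setup with sum formula on a field K. Let a, b, c be nonzero elements of K, and let (x₁, y₁, z₁) and (x₂, y₂, z₂) be two K-linearly independent vectors in K³ such that a·x_j + b·y_j + c·z_j = 0 for j = 1, 2. Then H^hom(a, b, c) ≤ H^hom(x₁, y₁, z₁) + H^hom(x₂, y₂, z₂). -/
import Mathlib


/-- A valuation setup with sum formula on a field `K`: for each `i` in the index set `I`, a
map `v i : K → ℤ` which restricts to a group homomorphism `Kˣ → ℤ` satisfying the
ultrametric inequality, with only finitely many `v i` nonzero at each `x ≠ 0`, positive
integer degrees `deg i`, and the sum formula `Σ_i v i x · deg i = 0` for `x ≠ 0`. -/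
structure ValuationSetup (K : Type*) [Field K] (I : Type*) where
  v : I → K → ℤ
  deg : I → ℕ
  deg_pos : ∀ i, 0 < deg i
  v_mul : ∀ i (x y : K), x ≠ 0 → y ≠ 0 → v i (x * y) = v i x + v i y
  v_add : ∀ i (x y : K), x ≠ 0 → y ≠ 0 → x + y ≠ 0 → min (v i x) (v i y) ≤ v i (x + y)
  finite_support : ∀ x : K, x ≠ 0 → {i | v i x ≠ 0}.Finite
  sum_formula : ∀ x : K, x ≠ 0 → ∑ᶠ i, v i x * (deg i : ℤ) = 0

/-- The homogeneous height `H^hom(P) = −Σ_i min{v i (P j) : P j ≠ 0} · deg i` of a (nonzero)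
vector `P`. -/
noncomputable def Hhom {K : Type*} [Field K] {I : Type*} (VS : ValuationSetup K I)
    {m : ℕ} (P : Fin m → K) : ℤ :=
  -∑ᶠ i, sInf ((fun j => VS.v i (P j)) '' {j | P j ≠ 0}) * (VS.deg i : ℤ)

section Aux

variable {K : Type*} [Field K] {I : Type*} (VS : ValuationSetup K I)

lemma VS_v_one (i : I) : VS.v i 1 = 0 := by
  have h := VS.v_mul i 1 1 one_ne_zero one_ne_zero
  rw [mul_one] at h; omega

lemma VS_v_neg_one (i : I) : VS.v i (-1) = 0 := by
  have h := VS.v_mul i (-1) (-1) (by norm_num) (by norm_num)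
  rw [neg_mul_neg, one_mul] at h
  have h1 := VS_v_one VS i
  omega

lemma VS_v_neg (i : I) {x : K} (hx : x ≠ 0) : VS.v i (-x) = VS.v i x := by
  have h := VS.v_mul i (-1) x (by norm_num) hx
  rw [neg_one_mul] at h
  rw [h, VS_v_neg_one VS i, zero_add]

/-- The minimum of `v i` over nonzero coordinates. -/
noncomputable def minv {m : ℕ} (P : Fin m → K) (i : I) : ℤ :=
  sInf ((fun j => VS.v i (P j)) '' {j | P j ≠ 0})

lemma Hhom_def {m : ℕ} (P : Fin m → K) :
    Hhom VS P = -∑ᶠ i, minv VS P i * (VS.deg i : ℤ) := rfl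

lemma minv_le {m : ℕ} {P : Fin m → K} {j : Fin m} (hj : P j ≠ 0) (i : I) :
    minv VS P i ≤ VS.v i (P j) :=
  csInf_le ((Set.toFinite _).image _).bddBelow ⟨j, hj, rfl⟩

lemma le_minv {m : ℕ} {P : Fin m → K} {j₀ : Fin m} (hj₀ : P j₀ ≠ 0) {i : I} {c : ℤ}
    (h : ∀ j, P j ≠ 0 → c ≤ VS.v i (P j)) : c ≤ minv VS P i := by
  refine le_csInf ⟨_, ⟨j₀, hj₀, rfl⟩⟩ ?_
  rintro b ⟨j, hj, rfl⟩
  exact h j hj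

lemma minv_eq_zero {m : ℕ} {P : Fin m → K} {j₀ : Fin m} (hj₀ : P j₀ ≠ 0) {i : I}
    (h : ∀ j, P j ≠ 0 → VS.v i (P j) = 0) : minv VS P i = 0 := by
  have himg : ((fun j => VS.v i (P j)) '' {j | P j ≠ 0}) = {0} := by
    apply subset_antisymm
    · rintro b ⟨j, hj, rfl⟩
      simp [h j hj]
    · rintro b hb
      simp only [Set.mem_singleton_iff] at hb
      refine ⟨j₀, hj₀, ?_⟩
      show VS.v i (P j₀) = b
      rw [h j₀ hj₀, hb]
  rw [minv, himg, csInf_singleton]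

lemma support_minv_finite {m : ℕ} {P : Fin m → K} {j₀ : Fin m} (hj₀ : P j₀ ≠ 0) :
    (Function.support fun i => minv VS P i * (VS.deg i : ℤ)).Finite := by
  have hsub : (Function.support fun i => minv VS P i * (VS.deg i : ℤ)) ⊆
      ⋃ j : Fin m, {i | P j ≠ 0 ∧ VS.v i (P j) ≠ 0} := by
    intro i hi
    simp only [Function.mem_support] at hi
    have hmv : minv VS P i ≠ 0 := fun h0 => hi (by rw [h0, zero_mul])
    by_contra hcon
    simp only [Set.mem_iUnion, Set.mem_setOf_eq, not_exists, not_and] at hcon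
    exact hmv (minv_eq_zero VS hj₀ fun j hj => not_not.mp (hcon j hj))
  refine Set.Finite.subset (Set.finite_iUnion fun j => ?_) hsub
  by_cases hj : P j = 0
  · have : {i | P j ≠ 0 ∧ VS.v i (P j) ≠ 0} = ∅ := by
      ext i; simp [hj]
    rw [this]; exact Set.finite_empty
  · exact (VS.finite_support (P j) hj).subset fun i hi => hi.2

lemma finsum_mono' {f g : I → ℤ} (hf : (Function.support f).Finite)
    (hg : (Function.support g).Finite) (h : ∀ i, f i ≤ g i) :
    ∑ᶠ i, f i ≤ ∑ᶠ i, g i := by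
  classical
  rw [finsum_eq_sum_of_support_subset f (s := (hf.union hg).toFinset)
      (by rw [Set.Finite.coe_toFinset]; exact Set.subset_union_left),
    finsum_eq_sum_of_support_subset g (s := (hf.union hg).toFinset)
      (by rw [Set.Finite.coe_toFinset]; exact Set.subset_union_right)]
  exact Finset.sum_le_sum fun i _ => h i

lemma cross_est (i : I) (p q r s : K) (c d : ℤ)
    (hmp : p ≠ 0 → c ≤ VS.v i p) (hmr : r ≠ 0 → c ≤ VS.v i r)
    (hnq : q ≠ 0 → d ≤ VS.v i q) (hns : s ≠ 0 → d ≤ VS.v i s)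
    (h : p * q - r * s ≠ 0) : c + d ≤ VS.v i (p * q - r * s) := by
  by_cases hpq : p * q = 0
  · have hrs : r * s ≠ 0 := fun h' => h (by rw [hpq, h', sub_zero])
    obtain ⟨hr, hs⟩ := mul_ne_zero_iff.mp hrs
    have heq : p * q - r * s = -(r * s) := by rw [hpq]; ring
    rw [heq, VS_v_neg VS i hrs, VS.v_mul i r s hr hs]
    exact add_le_add (hmr hr) (hns hs)
  · obtain ⟨hp, hq⟩ := mul_ne_zero_iff.mp hpq
    by_cases hrs : r * s = 0
    · have heq : p * q - r * s = p * q := by rw [hrs]; ring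
      rw [heq, VS.v_mul i p q hp hq]
      exact add_le_add (hmp hp) (hnq hq)
    · obtain ⟨hr, hs⟩ := mul_ne_zero_iff.mp hrs
      have key := VS.v_add i (p * q) (-(r * s)) hpq (neg_ne_zero.mpr hrs)
        (by rw [← sub_eq_add_neg]; exact h)
      rw [← sub_eq_add_neg] at key
      refine le_trans (le_min ?_ ?_) key
      · rw [VS.v_mul i p q hp hq]; exact add_le_add (hmp hp) (hnq hq)
      · rw [VS_v_neg VS i hrs, VS.v_mul i r s hr hs]
        exact add_le_add (hmr hr) (hns hs)

lemma Hhom_core (lam w1 w2 w3 x₁ y₁ z₁ x₂ y₂ z₂ : K)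
    (hlam : lam ≠ 0) (hw1 : w1 ≠ 0) (hw2 : w2 ≠ 0) (hw3 : w3 ≠ 0)
    (e1 : w1 = y₁ * z₂ - z₁ * y₂) (e2 : w2 = z₁ * x₂ - x₁ * z₂)
    (e3 : w3 = x₁ * y₂ - y₁ * x₂) :
    Hhom VS ![lam * w1, lam * w2, lam * w3] ≤
      Hhom VS ![x₁, y₁, z₁] + Hhom VS ![x₂, y₂, z₂] := by
  set P₁ : Fin 3 → K := ![x₁, y₁, z₁] with hP₁
  set P₂ : Fin 3 → K := ![x₂, y₂, z₂] with hP₂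
  set A : Fin 3 → K := ![lam * w1, lam * w2, lam * w3] with hA
  have hA0 : A 0 ≠ 0 := by
    show lam * w1 ≠ 0
    exact mul_ne_zero hlam hw1
  -- P₁ and P₂ have a nonzero coordinate
  have hP1ex : ∃ j, P₁ j ≠ 0 := by
    by_cases hy : y₁ = 0
    · have hz : z₁ ≠ 0 := by
        intro hz; apply hw1; rw [e1, hy, hz]; ring
      exact ⟨2, by show z₁ ≠ 0; exact hz⟩
    · exact ⟨1, by show y₁ ≠ 0; exact hy⟩
  have hP2ex : ∃ j, P₂ j ≠ 0 := by
    by_cases hy : y₂ = 0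
    · have hz : z₂ ≠ 0 := by
        intro hz; apply hw1; rw [e1, hy, hz]; ring
      exact ⟨2, by show z₂ ≠ 0; exact hz⟩
    · exact ⟨1, by show y₂ ≠ 0; exact hy⟩
  obtain ⟨j₁, hj₁⟩ := hP1ex
  obtain ⟨j₂, hj₂⟩ := hP2ex
  -- coordinate bounds
  have m10 : x₁ ≠ 0 → ∀ i, minv VS P₁ i ≤ VS.v i x₁ := fun h i =>
    minv_le VS (j := 0) (show x₁ ≠ 0 from h) i
  have m11 : y₁ ≠ 0 → ∀ i, minv VS P₁ i ≤ VS.v i y₁ := fun h i =>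
    minv_le VS (j := 1) (show y₁ ≠ 0 from h) i
  have m12 : z₁ ≠ 0 → ∀ i, minv VS P₁ i ≤ VS.v i z₁ := fun h i =>
    minv_le VS (j := 2) (show z₁ ≠ 0 from h) i
  have m20 : x₂ ≠ 0 → ∀ i, minv VS P₂ i ≤ VS.v i x₂ := fun h i =>
    minv_le VS (j := 0) (show x₂ ≠ 0 from h) i
  have m21 : y₂ ≠ 0 → ∀ i, minv VS P₂ i ≤ VS.v i y₂ := fun h i =>
    minv_le VS (j := 1) (show y₂ ≠ 0 from h) i
  have m22 : z₂ ≠ 0 → ∀ i, minv VS P₂ i ≤ VS.v i z₂ := fun h i =>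
    minv_le VS (j := 2) (show z₂ ≠ 0 from h) i
  -- key pointwise estimate
  have hptwise : ∀ i, VS.v i lam * (VS.deg i : ℤ) +
      (minv VS P₁ i * (VS.deg i : ℤ) + minv VS P₂ i * (VS.deg i : ℤ)) ≤
      minv VS A i * (VS.deg i : ℤ) := by
    intro i
    have hmain : VS.v i lam + (minv VS P₁ i + minv VS P₂ i) ≤ minv VS A i := by
      apply le_minv VS hA0
      intro j _
      fin_cases j
      · show _ ≤ VS.v i (lam * w1)
        rw [VS.v_mul i lam w1 hlam hw1]
        refine add_le_add le_rfl ?_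
        rw [e1] at hw1 ⊢
        exact cross_est VS i y₁ z₂ z₁ y₂ _ _
          (fun h => m11 h i) (fun h => m12 h i) (fun h => m22 h i) (fun h => m21 h i) hw1
      · show _ ≤ VS.v i (lam * w2)
        rw [VS.v_mul i lam w2 hlam hw2]
        refine add_le_add le_rfl ?_
        rw [e2] at hw2 ⊢
        exact cross_est VS i z₁ x₂ x₁ z₂ _ _
          (fun h => m12 h i) (fun h => m10 h i) (fun h => m20 h i) (fun h => m22 h i) hw2
      · show _ ≤ VS.v i (lam * w3)
        rw [VS.v_mul i lam w3 hlam hw3]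
        refine add_le_add le_rfl ?_
        rw [e3] at hw3 ⊢
        exact cross_est VS i x₁ y₂ y₁ x₂ _ _
          (fun h => m10 h i) (fun h => m11 h i) (fun h => m21 h i) (fun h => m20 h i) hw3
    calc VS.v i lam * (VS.deg i : ℤ) +
        (minv VS P₁ i * (VS.deg i : ℤ) + minv VS P₂ i * (VS.deg i : ℤ))
        = (VS.v i lam + (minv VS P₁ i + minv VS P₂ i)) * (VS.deg i : ℤ) := by ring
      _ ≤ minv VS A i * (VS.deg i : ℤ) :=
        mul_le_mul_of_nonneg_right hmain (Int.natCast_nonneg _)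
  -- finiteness of supports
  have hsl : (Function.support fun i => VS.v i lam * (VS.deg i : ℤ)).Finite :=
    (VS.finite_support lam hlam).subset fun i hi => by
      simp only [Function.mem_support] at hi
      simp only [Set.mem_setOf_eq]
      intro h0
      exact hi (by rw [h0, zero_mul])
  have hs1 : (Function.support fun i => minv VS P₁ i * (VS.deg i : ℤ)).Finite :=
    support_minv_finite VS hj₁
  have hs2 : (Function.support fun i => minv VS P₂ i * (VS.deg i : ℤ)).Finite :=
    support_minv_finite VS hj₂
  have hsA : (Function.support fun i => minv VS A i * (VS.deg i : ℤ)).Finite :=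
    support_minv_finite VS hA0
  have hs12 : (Function.support fun i =>
      minv VS P₁ i * (VS.deg i : ℤ) + minv VS P₂ i * (VS.deg i : ℤ)).Finite :=
    (hs1.union hs2).subset (Function.support_add _ _)
  have hsl12 : (Function.support fun i => VS.v i lam * (VS.deg i : ℤ) +
      (minv VS P₁ i * (VS.deg i : ℤ) + minv VS P₂ i * (VS.deg i : ℤ))).Finite :=
    ((hsl.union hs1).union hs2).subset (by
      intro i hi
      simp only [Function.mem_support] at hi
      simp only [Set.mem_union, Function.mem_support]
      by_contra hcon
      push_neg at hcon
      obtain ⟨⟨h1, h2⟩, h3⟩ := hcon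
      exact hi (by rw [h1, h2, h3]; ring))
  -- the main sum inequality
  have hsum : ∑ᶠ i, (VS.v i lam * (VS.deg i : ℤ) +
      (minv VS P₁ i * (VS.deg i : ℤ) + minv VS P₂ i * (VS.deg i : ℤ))) ≤
      ∑ᶠ i, minv VS A i * (VS.deg i : ℤ) :=
    finsum_mono' hsl12 hsA hptwise
  rw [finsum_add_distrib hsl hs12, finsum_add_distrib hs1 hs2,
    VS.sum_formula lam hlam, zero_add] at hsum
  rw [Hhom_def, Hhom_def, Hhom_def]
  linarith

end Aux

/-- in the valuation setup, if `a, b, c ≠ 0` and `(xⱼ, yⱼ, zⱼ)`, `j = 1, 2`,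
are two `K`-linearly independent vectors with `a·xⱼ + b·yⱼ + c·zⱼ = 0`, then
`H^hom(a,b,c) ≤ H^hom(x₁,y₁,z₁) + H^hom(x₂,y₂,z₂)`. -/
theorem Hhom_le_of_linear_relation {K : Type*} [Field K] {I : Type*}
    (VS : ValuationSetup K I) (a b c : K) (ha : a ≠ 0) (hb : b ≠ 0) (hc : c ≠ 0)
    (x₁ y₁ z₁ x₂ y₂ z₂ : K)
    (hindep : LinearIndependent K ![![x₁, y₁, z₁], ![x₂, y₂, z₂]])
    (h₁ : a * x₁ + b * y₁ + c * z₁ = 0) (h₂ : a * x₂ + b * y₂ + c * z₂ = 0) :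
    Hhom VS ![a, b, c] ≤ Hhom VS ![x₁, y₁, z₁] + Hhom VS ![x₂, y₂, z₂] := by
  have r12 : a * (z₁ * x₂ - x₁ * z₂) = b * (y₁ * z₂ - z₁ * y₂) := by
    linear_combination z₁ * h₂ - z₂ * h₁
  have r13 : a * (x₁ * y₂ - y₁ * x₂) = c * (y₁ * z₂ - z₁ * y₂) := by
    linear_combination y₂ * h₁ - y₁ * h₂
  have hpair := LinearIndependent.pair_iff.mp hindep
  have hw1 : y₁ * z₂ - z₁ * y₂ ≠ 0 := by
    intro h0
    have hw2 : z₁ * x₂ - x₁ * z₂ = 0 := by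
      have h' := r12
      rw [h0, mul_zero] at h'
      exact (mul_eq_zero.mp h').resolve_left ha
    have hw3 : x₁ * y₂ - y₁ * x₂ = 0 := by
      have h' := r13
      rw [h0, mul_zero] at h'
      exact (mul_eq_zero.mp h').resolve_left ha
    by_cases hx : x₁ = 0
    · by_cases hy : y₁ = 0
      · by_cases hz : z₁ = 0
        · have := (hpair 1 0 (by
            funext j
            fin_cases j <;> simp [hx, hy, hz])).1
          exact one_ne_zero this
        · have := (hpair z₂ (-z₁) (by
            funext j
            fin_cases j <;> simp
            · linear_combination -hw2
            · linear_combination h0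
            · ring)).2
          exact hz (neg_eq_zero.mp this)
      · have := (hpair y₂ (-y₁) (by
          funext j
          fin_cases j <;> simp
          · linear_combination hw3
          · ring
          · linear_combination -h0)).2
        exact hy (neg_eq_zero.mp this)
    · have := (hpair x₂ (-x₁) (by
        funext j
        fin_cases j <;> simp
        · ring
        · linear_combination -hw3
        · linear_combination hw2)).2
      exact hx (neg_eq_zero.mp this)
  have hw2 : z₁ * x₂ - x₁ * z₂ ≠ 0 := by
    intro h0
    rw [h0, mul_zero] at r12
    exact hw1 ((mul_eq_zero.mp r12.symm).resolve_left hb)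
  have hw3 : x₁ * y₂ - y₁ * x₂ ≠ 0 := by
    intro h0
    rw [h0, mul_zero] at r13
    exact hw1 ((mul_eq_zero.mp r13.symm).resolve_left hc)
  set lam : K := a / (y₁ * z₂ - z₁ * y₂) with hlamdef
  have hlam : lam ≠ 0 := div_ne_zero ha hw1
  have habc : ![a, b, c] = ![lam * (y₁ * z₂ - z₁ * y₂), lam * (z₁ * x₂ - x₁ * z₂),
      lam * (x₁ * y₂ - y₁ * x₂)] := by
    funext j
    fin_cases j
    · show a = lam * (y₁ * z₂ - z₁ * y₂)
      rw [hlamdef, div_mul_cancel₀ a hw1]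
    · show b = lam * (z₁ * x₂ - x₁ * z₂)
      rw [hlamdef, div_mul_eq_mul_div, eq_div_iff hw1]
      linear_combination -r12
    · show c = lam * (x₁ * y₂ - y₁ * x₂)
      rw [hlamdef, div_mul_eq_mul_div, eq_div_iff hw1]
      linear_combination -r13
  rw [habc]
  exact Hhom_core VS lam _ _ _ x₁ y₁ z₁ x₂ y₂ z₂ hlam hw1 hw2 hw3 rfl rfl rfl
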